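/- For any pair of integers k, ℓ ≥ 3, the Grundy total domination number of the Cartesian product of paths satisfies γ_gr^t(P_k □ P_ℓ) ≥ kℓ − min{k, ℓ}. -/

import Mathlib

open SimpleGraph

/-- A legal open neighborhood sequence in `G`. -/
def IsOpenLegal {α : Type*} (G : SimpleGraph α) (L : List α) : Prop :=
  L.Nodup ∧ ∀ i : Fin L.length, ∃ w, G.Adj (L.get i) w ∧
    ∀ j : Fin L.length, j < i → ¬ G.Adj (L.get j) w

/-- The Grundy total domination number of `G`. -/
noncomputable def grundyT {α : Type*} (G : SimpleGraph α) : ℕ :=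
  sSup {n | ∃ L : List α, IsOpenLegal G L ∧ L.length = n}

/-- A legal closed neighborhood (dominating) sequence in `G`. -/
def IsClosedLegal {α : Type*} (G : SimpleGraph α) (L : List α) : Prop :=
  L.Nodup ∧ ∀ i : Fin L.length, ∃ w, (G.Adj (L.get i) w ∨ L.get i = w) ∧
    ∀ j : Fin L.length, j < i → ¬ (G.Adj (L.get j) w ∨ L.get j = w)

/-- The Grundy domination number of `G`. -/
noncomputable def grundyDom {α : Type*} (G : SimpleGraph α) : ℕ :=
  sSup {n | ∃ L : List α, IsClosedLegal G L ∧ L.length = n}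

/-- The direct (tensor) product of simple graphs. -/
def directProd {α β : Type*} (G : SimpleGraph α) (H : SimpleGraph β) : SimpleGraph (α × β) where
  Adj x y := G.Adj x.1 y.1 ∧ H.Adj x.2 y.2
  symm := ⟨fun _ _ h => ⟨h.1.symm, h.2.symm⟩⟩
  loopless := ⟨fun _ h => G.irrefl h.1⟩

/-- The lexicographic product of simple graphs. -/
def lexProd {α β : Type*} (G : SimpleGraph α) (H : SimpleGraph β) : SimpleGraph (α × β) where
  Adj x y := G.Adj x.1 y.1 ∨ (x.1 = y.1 ∧ H.Adj x.2 y.2)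
  symm := by
    refine ⟨?_⟩
    rintro x y (h | ⟨h1, h2⟩)
    · exact Or.inl h.symm
    · exact Or.inr ⟨h1.symm, h2.symm⟩
  loopless := by
    refine ⟨?_⟩
    rintro x (h | ⟨_, h⟩)
    · exact G.irrefl h
    · exact H.irrefl h

/-- The strong product of simple graphs. -/
def strongProd {α β : Type*} (G : SimpleGraph α) (H : SimpleGraph β) : SimpleGraph (α × β) where
  Adj x y := (G.Adj x.1 y.1 ∧ x.2 = y.2) ∨ (x.1 = y.1 ∧ H.Adj x.2 y.2) ∨
    (G.Adj x.1 y.1 ∧ H.Adj x.2 y.2)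
  symm := by
    refine ⟨?_⟩
    rintro x y (⟨h, e⟩ | ⟨e, h⟩ | ⟨h1, h2⟩)
    · exact Or.inl ⟨h.symm, e.symm⟩
    · exact Or.inr (Or.inl ⟨e.symm, h.symm⟩)
    · exact Or.inr (Or.inr ⟨h1.symm, h2.symm⟩)
  loopless := by
    refine ⟨?_⟩
    rintro x (⟨h, _⟩ | ⟨_, h⟩ | ⟨h, _⟩)
    · exact G.irrefl h
    · exact H.irrefl h
    · exact G.irrefl h

/-- The minimum number of complete bipartite subgraphs of `G` covering all edges of `G`. -/
noncomputable def bc {α : Type*} (G : SimpleGraph α) : ℕ :=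
  sInf {k | ∃ A B : Fin k → Set α,
    (∀ i a b, a ∈ A i → b ∈ B i → G.Adj a b) ∧
    (∀ u v, G.Adj u v → ∃ i, (u ∈ A i ∧ v ∈ B i) ∨ (v ∈ A i ∧ u ∈ B i))}

/-- `aD G L` is the number of entries of `L` not adjacent to any earlier entry. -/
noncomputable def aD {α : Type*} (G : SimpleGraph α) (L : List α) : ℕ :=
  {i : Fin L.length | ∀ j : Fin L.length, j < i → ¬ G.Adj (L.get j) (L.get i)}.ncard

/-- The vertex cover number of `G`. -/
noncomputable def vertexCoverNum {α : Type*} (G : SimpleGraph α) : ℕ :=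
  sInf {n | ∃ S : Finset α, S.card = n ∧ ∀ u v, G.Adj u v → u ∈ S ∨ v ∈ S}

/-- The independence number of `G`. -/
noncomputable def indepNum {α : Type*} (G : SimpleGraph α) : ℕ :=
  sSup {n | ∃ S : Finset α, S.card = n ∧ ∀ u ∈ S, ∀ v ∈ S, ¬ G.Adj u v}

lemma isOpenLegal_map {α β : Type*} {G : SimpleGraph α} {H : SimpleGraph β}
    (e : G ≃g H) {L : List α} (h : IsOpenLegal G L) :
    IsOpenLegal H (L.map e) := by
  obtain ⟨hnd, hleg⟩ := h
  refine ⟨hnd.map (fun _ _ h => e.injective h), ?_⟩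
  intro i
  have hlen : (L.map (⇑e)).length = L.length := L.length_map _
  obtain ⟨w, hw1, hw2⟩ := hleg (Fin.cast hlen i)
  refine ⟨e w, ?_, ?_⟩
  · rw [List.get_eq_getElem, List.getElem_map]; exact e.map_adj_iff.mpr hw1
  · intro j hj hadj
    rw [List.get_eq_getElem, List.getElem_map] at hadj
    exact hw2 (Fin.cast hlen j) hj (e.map_adj_iff.mp hadj)

lemma main_lemma (k l : ℕ) (hk : 3 ≤ k) (hl : 3 ≤ l) :
    (k - 1) * l ≤ grundyT ((pathGraph k).boxProd (pathGraph l)) := by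
  have hl0 : 0 < l := by omega
  set n := (k - 1) * l with hn
  have hdiv' : ∀ p : Fin n, (p : ℕ) / l < k - 1 := by
    intro p
    exact Nat.div_lt_of_lt_mul (Nat.mul_comm (k - 1) l ▸ p.isLt)
  have hdiv : ∀ p : Fin n, (p : ℕ) / l < k := fun p => lt_of_lt_of_le (hdiv' p) (by omega)
  set f : Fin n → Fin k × Fin l :=
    fun p => (⟨(p : ℕ) / l, hdiv p⟩, ⟨(p : ℕ) % l, Nat.mod_lt _ hl0⟩) with hf
  have hinj : Function.Injective f := by
    intro p q h
    simp only [hf, Prod.mk.injEq, Fin.mk.injEq] at h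
    have hdmp := Nat.div_add_mod (p : ℕ) l
    have hdmq := Nat.div_add_mod (q : ℕ) l
    refine Fin.ext ?_
    rw [← hdmp, ← hdmq, h.1, h.2]
  set L : List (Fin k × Fin l) := List.ofFn f with hL
  have hlen : L.length = n := List.length_ofFn (f := f)
  have hlegal : IsOpenLegal ((pathGraph k).boxProd (pathGraph l)) L := by
    constructor
    · exact List.nodup_ofFn.mpr hinj
    · intro i
      set p : Fin n := Fin.cast (by rw [hlen]) i with hp
      have hget : L.get i = f p := List.get_ofFn f i
      refine ⟨(⟨(p : ℕ) / l + 1, by have := hdiv' p; omega⟩,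
        ⟨(p : ℕ) % l, Nat.mod_lt _ hl0⟩), ?_, ?_⟩
      · rw [hget]
        exact boxProd_adj.mpr (Or.inl ⟨pathGraph_adj.mpr (Or.inl rfl), rfl⟩)
      · intro j hj hadj
        set q : Fin n := Fin.cast (by rw [hlen]) j with hq
        have hgetj : L.get j = f q := List.get_ofFn f j
        have hqp : (q : ℕ) < (p : ℕ) := hj
        have hdle : (q : ℕ) / l ≤ (p : ℕ) / l := Nat.div_le_div_right hqp.le
        have hdmp := Nat.div_add_mod (p : ℕ) l
        have hdmq := Nat.div_add_mod (q : ℕ) l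
        have hmp : (p : ℕ) % l < l := Nat.mod_lt _ hl0
        have hmq : (q : ℕ) % l < l := Nat.mod_lt _ hl0
        rw [hgetj] at hadj
        rcases boxProd_adj.mp hadj with ⟨ha, hb⟩ | ⟨ha, hb⟩
        · have hb' : (q : ℕ) % l = (p : ℕ) % l := congrArg Fin.val hb
          rcases pathGraph_adj.mp ha with h1 | h1 <;>
            simp only [hf, Fin.val_mk] at h1
          · -- q/l + 1 = p/l + 1, so equal rows and columns: q = p
            have hdd : (q : ℕ) / l = (p : ℕ) / l := by omega
            have : (q : ℕ) = (p : ℕ) := by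
              calc (q : ℕ) = l * ((q:ℕ)/l) + (q:ℕ)%l := hdmq.symm
                _ = l * ((p:ℕ)/l) + (p:ℕ)%l := by rw [hdd, hb']
                _ = (p : ℕ) := hdmp
            omega
          · -- p/l + 1 + 1 = q/l, contradiction with hdle
            have : (q : ℕ) / l = (p : ℕ) / l + 2 := by omega
            omega
        · have h1 : (q : ℕ) / l = (p : ℕ) / l + 1 := congrArg Fin.val hb
          omega
  have hmem : n ∈ {m | ∃ L : List (Fin k × Fin l),
      IsOpenLegal ((pathGraph k).boxProd (pathGraph l)) L ∧ L.length = m} :=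
    ⟨L, hlegal, hlen⟩
  refine le_csSup ⟨Fintype.card (Fin k × Fin l), ?_⟩ hmem
  rintro m ⟨L', hL', rfl⟩
  exact hL'.1.length_le_card

theorem grundyT_boxProd_paths_ge (k l : ℕ) (hk : 3 ≤ k) (hl : 3 ≤ l) :
    k * l - min k l ≤ grundyT ((pathGraph k).boxProd (pathGraph l)) := by
  rcases le_total l k with h | h
  · have : k * l - min k l = (k - 1) * l := by
      rw [min_eq_right h, Nat.sub_one_mul]
    rw [this]
    exact main_lemma k l hk hl
  · have heq : k * l - min k l = (l - 1) * k := by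
      rw [min_eq_left h, Nat.sub_one_mul, Nat.mul_comm]
    rw [heq]
    refine le_trans (main_lemma l k hl hk) ?_
    apply csSup_le_csSup'
    · refine ⟨Fintype.card (Fin k × Fin l), ?_⟩
      rintro m ⟨L', hL', rfl⟩
      exact hL'.1.length_le_card
    · rintro m ⟨L', hL', rfl⟩
      exact ⟨L'.map (boxProdComm (pathGraph l) (pathGraph k)),
        isOpenLegal_map _ hL', by simp⟩
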